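/- Let p ∈ [0,1) and q₁, …, q_k ≥ 0 with ∑ q_i ≤ 1 and p·∑ q_i < 1. Then the inclusion–exclusion sum ∑_{I ⊆ {1,…,k}} (−1)^{|I|} · (1−p)/(1 − p·∑_{i ∉ I} q_i) is nonnegative. -/

import Mathlib

open Finset

-- alternating sum over subsets of T is the indicator of T = ∅ hence nonneg
lemma aux_ie {k : ℕ} (T : Finset (Fin k)) :
    0 ≤ ∑ I ∈ (Finset.univ : Finset (Fin k)).powerset,
      (if I ⊆ T then ((-1 : ℝ) ^ I.card) else 0) := by
  classical
  have hfilter : (Finset.univ : Finset (Fin k)).powerset.filter (· ⊆ T) = T.powerset := by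
    ext I; simp [Finset.mem_powerset, Finset.subset_univ]
  rw [← Finset.sum_filter, hfilter]
  have : (∑ m ∈ T.powerset, (-1 : ℝ) ^ m.card)
      = ((∑ m ∈ T.powerset, (-1 : ℤ) ^ m.card : ℤ) : ℝ) := by push_cast; rfl
  rw [this, Finset.sum_powerset_neg_one_pow_card]
  split <;> norm_num

lemma aux_comb {k : ℕ} (q : Fin k → ℝ) (hq : ∀ i, 0 ≤ q i) (n : ℕ) :
    0 ≤ ∑ I ∈ (Finset.univ : Finset (Fin k)).powerset,
      (-1 : ℝ) ^ I.card * (∑ i ∈ Iᶜ, q i) ^ n := by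
  classical
  have hpow : ∀ I : Finset (Fin k), (∑ i ∈ Iᶜ, q i) ^ n
      = ∑ f ∈ Fintype.piFinset (fun _ : Fin n => (Finset.univ : Finset (Fin k))),
          (if (∀ j, f j ∉ I) then ∏ j, q (f j) else 0) := by
    intro I
    have h1 : (∑ i ∈ Iᶜ, q i) = ∑ i, (if i ∉ I then q i else 0) := by
      rw [Finset.sum_ite, Finset.sum_const_zero, add_zero]
      congr 1
      ext i; simp [Finset.mem_compl]
    calc (∑ i ∈ Iᶜ, q i) ^ n
        = ∏ _j : Fin n, (∑ i, (if i ∉ I then q i else 0)) := by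
          rw [Finset.prod_const, h1, Finset.card_univ, Fintype.card_fin]
      _ = ∑ f ∈ Fintype.piFinset (fun _ : Fin n => (Finset.univ : Finset (Fin k))),
            ∏ j, (if f j ∉ I then q (f j) else 0) := by
          rw [Finset.prod_univ_sum]
      _ = _ := by
          refine Finset.sum_congr rfl fun f _ => ?_
          rw [Fintype.prod_ite_zero]
          simp
  simp_rw [hpow, Finset.mul_sum]
  rw [Finset.sum_comm]
  refine Finset.sum_nonneg fun f _ => ?_
  have hP : 0 ≤ ∏ j, q (f j) := Finset.prod_nonneg fun j _ => hq _
  have hcond : ∀ I : Finset (Fin k), (∀ j, f j ∉ I) ↔ I ⊆ (Finset.image f Finset.univ)ᶜ := by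
    intro I
    constructor
    · intro h i hi
      simp only [Finset.mem_compl, Finset.mem_image] at *
      rintro ⟨j, -, rfl⟩
      exact h j hi
    · intro h j hj
      have := h hj
      simp only [Finset.mem_compl, Finset.mem_image] at this
      exact this ⟨j, Finset.mem_univ j, rfl⟩
  have : ∀ I : Finset (Fin k), (-1 : ℝ) ^ I.card * (if (∀ j, f j ∉ I) then ∏ j, q (f j) else 0)
      = (∏ j, q (f j)) * (if I ⊆ (Finset.image f Finset.univ)ᶜ then ((-1 : ℝ) ^ I.card) else 0) := by
    intro I
    by_cases h : ∀ j, f j ∉ I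
    · rw [if_pos h, if_pos ((hcond I).1 h)]; ring
    · rw [if_neg h, if_neg (fun hc => h ((hcond I).2 hc))]; ring
  simp_rw [this]
  rw [← Finset.mul_sum]
  exact mul_nonneg hP (aux_ie _)

theorem stmt4 (k : ℕ) (p : ℝ) (hp : p ∈ Set.Ico (0:ℝ) 1) (q : Fin k → ℝ)
    (hq : ∀ i, 0 ≤ q i) (hsum : ∑ i, q i ≤ 1) (hpq : p * ∑ i, q i < 1) :
    0 ≤ ∑ I ∈ (Finset.univ : Finset (Fin k)).powerset,
      (-1 : ℝ) ^ I.card * (1 - p) / (1 - p * ∑ i ∈ Iᶜ, q i) := by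
  classical
  obtain ⟨hp0, hp1⟩ := hp
  set s : Finset (Fin k) → ℝ := fun I => ∑ i ∈ Iᶜ, q i with hs
  have hs0 : ∀ I, 0 ≤ p * s I := fun I =>
    mul_nonneg hp0 (Finset.sum_nonneg fun i _ => hq i)
  have hs1 : ∀ I, p * s I < 1 := by
    intro I
    refine lt_of_le_of_lt ?_ hpq
    exact mul_le_mul_of_nonneg_left
      (Finset.sum_le_sum_of_subset_of_nonneg (Finset.subset_univ _) fun i _ _ => hq i) hp0
  have hterm : ∀ I ∈ (Finset.univ : Finset (Fin k)).powerset,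
      (-1 : ℝ) ^ I.card * (1 - p) / (1 - p * s I)
        = ∑' n : ℕ, ((-1 : ℝ) ^ I.card * (1 - p)) * (p * s I) ^ n := by
    intro I _
    rw [tsum_mul_left, tsum_geometric_of_lt_one (hs0 I) (hs1 I), div_eq_mul_inv]
  rw [Finset.sum_congr rfl hterm, ← Summable.tsum_finsetSum
    (fun I _ => (summable_geometric_of_lt_one (hs0 I) (hs1 I)).mul_left _)]
  refine tsum_nonneg fun n => ?_
  have : ∀ I ∈ (Finset.univ : Finset (Fin k)).powerset,
      ((-1 : ℝ) ^ I.card * (1 - p)) * (p * s I) ^ n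
        = ((1 - p) * p ^ n) * ((-1 : ℝ) ^ I.card * (s I) ^ n) := by
    intro I _
    rw [mul_pow]; ring
  rw [Finset.sum_congr rfl this, ← Finset.mul_sum]
  exact mul_nonneg (mul_nonneg (by linarith) (pow_nonneg hp0 n)) (aux_comb q hq n)
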